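/- For the Bol 5-web on U = {(x,y) ∈ ℝ² : 0 < x < 1, 0 < y < 1, x ≠ y} given by web functions f(x,y) = y/x, g(x,y) = (1−y)/(1−x), g₅(x,y) = (x−xy)/(y−xy), the relative invariant I₅ := I(f,g₅) − I(f,g) is not identically zero on U, where I(f,p) = ((∂₁p)²∂₂²p − 2∂₁p·∂₂p·∂₁∂₂p + (∂₂p)²∂₁²p)/(∂₁p·∂₂p·(∂₂p − ∂₁p)) with ∂₁ = −(1/f_x)∂_x, ∂₂ = −(1/f_y)∂_y. Consequently the Bol 5-web is not linearizable (granting the linearizability criterion). -/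

import Mathlib

noncomputable def px (f : ℝ × ℝ → ℝ) (z : ℝ × ℝ) : ℝ := fderiv ℝ f z (1, 0)
noncomputable def py (f : ℝ × ℝ → ℝ) (z : ℝ × ℝ) : ℝ := fderiv ℝ f z (0, 1)
noncomputable def d1 (f g : ℝ × ℝ → ℝ) (z : ℝ × ℝ) : ℝ := -(px g z) / px f z
noncomputable def d2 (f g : ℝ × ℝ → ℝ) (z : ℝ × ℝ) : ℝ := -(py g z) / py f z

/-- The second-order invariant `I(f,p)`. -/
noncomputable def Iinv (f p : ℝ × ℝ → ℝ) (z : ℝ × ℝ) : ℝ :=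
  ((d1 f p z) ^ 2 * d2 f (d2 f p) z - 2 * d1 f p z * d2 f p z * d1 f (d2 f p) z +
      (d2 f p z) ^ 2 * d1 f (d1 f p) z) /
    (d1 f p z * d2 f p z * (d2 f p z - d1 f p z))

/-! ### Auxiliary definitions -/

noncomputable def Ff : ℝ × ℝ → ℝ := fun z => z.2 / z.1
noncomputable def Gg : ℝ × ℝ → ℝ := fun z => (1 - z.2) / (1 - z.1)
noncomputable def Gg5 : ℝ × ℝ → ℝ := fun z => (z.1 - z.1 * z.2) / (z.2 - z.1 * z.2)

noncomputable def D1G : ℝ × ℝ → ℝ := fun z => z.1 ^ 2 * (1 - z.2) / (z.2 * (1 - z.1) ^ 2)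
noncomputable def D2G : ℝ × ℝ → ℝ := fun z => z.1 / (1 - z.1)
noncomputable def D1G5 : ℝ × ℝ → ℝ := fun z => z.1 ^ 2 * (1 - z.2) / (z.2 ^ 2 * (1 - z.1) ^ 2)
noncomputable def D2G5 : ℝ × ℝ → ℝ := fun z => z.1 ^ 2 / ((1 - z.1) * z.2 ^ 2)

def Sset : Set (ℝ × ℝ) := {z | 0 < z.1 ∧ z.1 < 1 ∧ 0 < z.2}

noncomputable def z₀ : ℝ × ℝ := (1/2, 1/4)

lemma hz₀S : z₀ ∈ Sset := ⟨by norm_num [z₀], by norm_num [z₀], by norm_num [z₀]⟩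

lemma Sset_open : IsOpen Sset := by
  have : Sset = (fun z : ℝ × ℝ => z.1) ⁻¹' (Set.Ioo 0 1) ∩ (fun z : ℝ × ℝ => z.2) ⁻¹' (Set.Ioi 0) := by
    ext z; simp [Sset, Set.mem_Ioo, Set.mem_Ioi]; tauto
  rw [this]
  exact (isOpen_Ioo.preimage continuous_fst).inter (isOpen_Ioi.preimage continuous_snd)

/-! ### Partial derivatives via slices -/

lemma px_eq_deriv (p : ℝ × ℝ → ℝ) (z : ℝ × ℝ) (hd : DifferentiableAt ℝ p z) :
    px p z = deriv (fun t => p (t, z.2)) z.1 := by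
  have hsl : HasDerivAt (fun t : ℝ => (t, z.2)) ((1 : ℝ), (0 : ℝ)) z.1 :=
    (hasDerivAt_id z.1).prodMk (hasDerivAt_const z.1 z.2)
  have hz' : HasFDerivAt p (fderiv ℝ p z) (z.1, z.2) := by
    rw [Prod.mk.eta]; exact hd.hasFDerivAt
  have h2 : HasDerivAt (fun t => p (t, z.2)) ((fderiv ℝ p z) (1, 0)) z.1 :=
    hz'.comp_hasDerivAt z.1 hsl
  rw [px, h2.deriv]

lemma py_eq_deriv (p : ℝ × ℝ → ℝ) (z : ℝ × ℝ) (hd : DifferentiableAt ℝ p z) :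
    py p z = deriv (fun t => p (z.1, t)) z.2 := by
  have hsl : HasDerivAt (fun t : ℝ => (z.1, t)) ((0 : ℝ), (1 : ℝ)) z.2 :=
    (hasDerivAt_const z.2 z.1).prodMk (hasDerivAt_id z.2)
  have hz' : HasFDerivAt p (fderiv ℝ p z) (z.1, z.2) := by
    rw [Prod.mk.eta]; exact hd.hasFDerivAt
  have h2 : HasDerivAt (fun t => p (z.1, t)) ((fderiv ℝ p z) (0, 1)) z.2 :=
    hz'.comp_hasDerivAt z.2 hsl
  rw [py, h2.deriv]

/-! ### Derivatives of the web functions on `Sset` -/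

lemma px_F (z : ℝ × ℝ) (hz : z ∈ Sset) : px Ff z = -z.2 / z.1 ^ 2 := by
  obtain ⟨h1, h2, h3⟩ := hz
  have hx : z.1 ≠ 0 := ne_of_gt h1
  have hd : DifferentiableAt ℝ Ff z := by
    have h' : DifferentiableAt ℝ (fun w : ℝ × ℝ => w.2 / w.1) z :=
      by simp only [div_eq_mul_inv]; fun_prop (disch := assumption)
    exact h'
  have h : HasDerivAt (fun t : ℝ => z.2 / t) (-z.2 / z.1 ^ 2) z.1 := by
    have h0 := (hasDerivAt_const z.1 z.2).div (hasDerivAt_id z.1) hx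
    refine h0.congr_deriv ?_
    simp only [id, Pi.sub_apply]
    field_simp
    ring
  rw [px_eq_deriv _ _ hd, show (fun t : ℝ => Ff (t, z.2)) = (fun t : ℝ => z.2 / t) from rfl,
    h.deriv]

lemma py_F (z : ℝ × ℝ) (hz : z ∈ Sset) : py Ff z = 1 / z.1 := by
  obtain ⟨h1, h2, h3⟩ := hz
  have hx : z.1 ≠ 0 := ne_of_gt h1
  have hd : DifferentiableAt ℝ Ff z := by
    have h' : DifferentiableAt ℝ (fun w : ℝ × ℝ => w.2 / w.1) z :=
      by simp only [div_eq_mul_inv]; fun_prop (disch := assumption)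
    exact h'
  have h : HasDerivAt (fun t : ℝ => t / z.1) (1 / z.1) z.2 := by
    have h0 := (hasDerivAt_id z.2).div_const z.1
    exact h0
  rw [py_eq_deriv _ _ hd, show (fun t : ℝ => Ff (z.1, t)) = (fun t : ℝ => t / z.1) from rfl,
    h.deriv]

lemma px_G (z : ℝ × ℝ) (hz : z ∈ Sset) : px Gg z = (1 - z.2) / (1 - z.1) ^ 2 := by
  obtain ⟨h1, h2, h3⟩ := hz
  have hx : (1 : ℝ) - z.1 ≠ 0 := by intro h; linarith [h]
  have hd : DifferentiableAt ℝ Gg z := by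
    have h' : DifferentiableAt ℝ (fun w : ℝ × ℝ => (1 - w.2) / (1 - w.1)) z :=
      by simp only [div_eq_mul_inv]; fun_prop (disch := assumption)
    exact h'
  have h : HasDerivAt (fun t : ℝ => (1 - z.2) / (1 - t)) ((1 - z.2) / (1 - z.1) ^ 2) z.1 := by
    have h0 := (hasDerivAt_const z.1 (1 - z.2)).div ((hasDerivAt_id z.1).const_sub 1) hx
    refine h0.congr_deriv ?_
    simp only [id, Pi.sub_apply]
    field_simp
    ring
  rw [px_eq_deriv _ _ hd,
    show (fun t : ℝ => Gg (t, z.2)) = (fun t : ℝ => (1 - z.2) / (1 - t)) from rfl, h.deriv]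

lemma py_G (z : ℝ × ℝ) (hz : z ∈ Sset) : py Gg z = -1 / (1 - z.1) := by
  obtain ⟨h1, h2, h3⟩ := hz
  have hx : (1 : ℝ) - z.1 ≠ 0 := by intro h; linarith [h]
  have hd : DifferentiableAt ℝ Gg z := by
    have h' : DifferentiableAt ℝ (fun w : ℝ × ℝ => (1 - w.2) / (1 - w.1)) z :=
      by simp only [div_eq_mul_inv]; fun_prop (disch := assumption)
    exact h'
  have h : HasDerivAt (fun t : ℝ => (1 - t) / (1 - z.1)) (-1 / (1 - z.1)) z.2 := by
    have h0 := ((hasDerivAt_id z.2).const_sub 1).div_const (1 - z.1)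
    exact h0
  rw [py_eq_deriv _ _ hd,
    show (fun t : ℝ => Gg (z.1, t)) = (fun t : ℝ => (1 - t) / (1 - z.1)) from rfl, h.deriv]

lemma px_G5 (z : ℝ × ℝ) (hz : z ∈ Sset) : px Gg5 z = (1 - z.2) / (z.2 * (1 - z.1) ^ 2) := by
  obtain ⟨h1, h2, h3⟩ := hz
  have hx1 : (1 : ℝ) - z.1 ≠ 0 := by intro h; linarith [h]
  have hy : z.2 ≠ 0 := ne_of_gt h3
  have hden : z.2 - z.1 * z.2 ≠ 0 := by
    have : (0:ℝ) < z.2 * (1 - z.1) := mul_pos h3 (by linarith)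
    intro h; nlinarith [this]
  have hd : DifferentiableAt ℝ Gg5 z := by
    have h' : DifferentiableAt ℝ (fun w : ℝ × ℝ => (w.1 - w.1 * w.2) / (w.2 - w.1 * w.2)) z :=
      by simp only [div_eq_mul_inv]; fun_prop (disch := assumption)
    exact h'
  have h : HasDerivAt (fun t : ℝ => (t - t * z.2) / (z.2 - t * z.2))
      ((1 - z.2) / (z.2 * (1 - z.1) ^ 2)) z.1 := by
    have h0 := ((hasDerivAt_id z.1).sub ((hasDerivAt_id z.1).mul_const z.2)).div
      ((hasDerivAt_const z.1 z.2).sub ((hasDerivAt_id z.1).mul_const z.2)) hden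
    refine h0.congr_deriv ?_
    simp only [id, Pi.sub_apply]
    field_simp
    ring
  rw [px_eq_deriv _ _ hd,
    show (fun t : ℝ => Gg5 (t, z.2)) = (fun t : ℝ => (t - t * z.2) / (z.2 - t * z.2)) from rfl,
    h.deriv]

lemma py_G5 (z : ℝ × ℝ) (hz : z ∈ Sset) : py Gg5 z = -z.1 / ((1 - z.1) * z.2 ^ 2) := by
  obtain ⟨h1, h2, h3⟩ := hz
  have hx1 : (1 : ℝ) - z.1 ≠ 0 := by intro h; linarith [h]
  have hy : z.2 ≠ 0 := ne_of_gt h3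
  have hden : z.2 - z.1 * z.2 ≠ 0 := by
    have : (0:ℝ) < z.2 * (1 - z.1) := mul_pos h3 (by linarith)
    intro h; nlinarith [this]
  have hd : DifferentiableAt ℝ Gg5 z := by
    have h' : DifferentiableAt ℝ (fun w : ℝ × ℝ => (w.1 - w.1 * w.2) / (w.2 - w.1 * w.2)) z :=
      by simp only [div_eq_mul_inv]; fun_prop (disch := assumption)
    exact h'
  have h : HasDerivAt (fun t : ℝ => (z.1 - z.1 * t) / (t - z.1 * t))
      (-z.1 / ((1 - z.1) * z.2 ^ 2)) z.2 := by
    have h0 := ((hasDerivAt_const z.2 z.1).sub ((hasDerivAt_id z.2).const_mul z.1)).div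
      ((hasDerivAt_id z.2).sub ((hasDerivAt_id z.2).const_mul z.1)) hden
    refine h0.congr_deriv ?_
    simp only [id, Pi.sub_apply]
    field_simp
    ring
  rw [py_eq_deriv _ _ hd,
    show (fun t : ℝ => Gg5 (z.1, t)) = (fun t : ℝ => (z.1 - z.1 * t) / (t - z.1 * t)) from rfl,
    h.deriv]

/-! ### First-order invariant derivations agree with explicit formulas on `Sset` -/

lemma d1_G_eq : ∀ z ∈ Sset, d1 Ff Gg z = D1G z := by
  intro z hz
  obtain ⟨h1, h2, h3⟩ := id hz
  have hx : z.1 ≠ 0 := ne_of_gt h1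
  have hx1 : (1 : ℝ) - z.1 ≠ 0 := by intro h; linarith [h]
  have hy : z.2 ≠ 0 := ne_of_gt h3
  rw [d1, px_G z hz, px_F z hz]
  simp only [D1G]
  field_simp

lemma d2_G_eq : ∀ z ∈ Sset, d2 Ff Gg z = D2G z := by
  intro z hz
  obtain ⟨h1, h2, h3⟩ := id hz
  have hx : z.1 ≠ 0 := ne_of_gt h1
  have hx1 : (1 : ℝ) - z.1 ≠ 0 := by intro h; linarith [h]
  rw [d2, py_G z hz, py_F z hz]
  simp only [D2G]
  field_simp

lemma d1_G5_eq : ∀ z ∈ Sset, d1 Ff Gg5 z = D1G5 z := by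
  intro z hz
  obtain ⟨h1, h2, h3⟩ := id hz
  have hx : z.1 ≠ 0 := ne_of_gt h1
  have hx1 : (1 : ℝ) - z.1 ≠ 0 := by intro h; linarith [h]
  have hy : z.2 ≠ 0 := ne_of_gt h3
  rw [d1, px_G5 z hz, px_F z hz]
  simp only [D1G5]
  field_simp

lemma d2_G5_eq : ∀ z ∈ Sset, d2 Ff Gg5 z = D2G5 z := by
  intro z hz
  obtain ⟨h1, h2, h3⟩ := id hz
  have hx : z.1 ≠ 0 := ne_of_gt h1
  have hx1 : (1 : ℝ) - z.1 ≠ 0 := by intro h; linarith [h]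
  have hy : z.2 ≠ 0 := ne_of_gt h3
  rw [d2, py_G5 z hz, py_F z hz]
  simp only [D2G5]
  field_simp

/-! ### Transfer of derivatives through local equality -/

lemma px_congr_S {p q : ℝ × ℝ → ℝ} (h : ∀ z ∈ Sset, p z = q z) {z : ℝ × ℝ} (hz : z ∈ Sset) :
    px p z = px q z := by
  unfold px
  rw [Filter.EventuallyEq.fderiv_eq (Filter.eventuallyEq_of_mem (Sset_open.mem_nhds hz) h)]

lemma py_congr_S {p q : ℝ × ℝ → ℝ} (h : ∀ z ∈ Sset, p z = q z) {z : ℝ × ℝ} (hz : z ∈ Sset) :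
    py p z = py q z := by
  unfold py
  rw [Filter.EventuallyEq.fderiv_eq (Filter.eventuallyEq_of_mem (Sset_open.mem_nhds hz) h)]

/-! ### Numeric second derivatives at `z₀` -/

lemma px_D1G_z0 : px D1G z₀ = 24 := by
  have hd : DifferentiableAt ℝ D1G z₀ := by
    have h' : DifferentiableAt ℝ (fun w : ℝ × ℝ => w.1 ^ 2 * (1 - w.2) / (w.2 * (1 - w.1) ^ 2)) z₀ :=
      by simp only [div_eq_mul_inv]; fun_prop (disch := norm_num [z₀])
    exact h'
  have h : HasDerivAt (fun t : ℝ => t ^ 2 * (1 - (1/4 : ℝ)) / ((1/4 : ℝ) * (1 - t) ^ 2))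
      24 (1/2 : ℝ) := by
    have h0 := ((hasDerivAt_pow 2 ((1/2):ℝ)).mul_const (1 - (1/4 : ℝ))).div
      ((((hasDerivAt_id ((1/2):ℝ)).const_sub 1).pow 2).const_mul ((1/4 : ℝ))) (by norm_num)
    refine h0.congr_deriv ?_
    norm_num
  rw [px_eq_deriv _ _ hd,
    show (fun t : ℝ => D1G (t, z₀.2)) =
      (fun t : ℝ => t ^ 2 * (1 - (1/4 : ℝ)) / ((1/4 : ℝ) * (1 - t) ^ 2)) from rfl,
    show z₀.1 = (1/2 : ℝ) from rfl, h.deriv]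

lemma px_D2G_z0 : px D2G z₀ = 4 := by
  have hd : DifferentiableAt ℝ D2G z₀ := by
    have h' : DifferentiableAt ℝ (fun w : ℝ × ℝ => w.1 / (1 - w.1)) z₀ :=
      by simp only [div_eq_mul_inv]; fun_prop (disch := norm_num [z₀])
    exact h'
  have h : HasDerivAt (fun t : ℝ => t / (1 - t)) 4 (1/2 : ℝ) := by
    have h0 := (hasDerivAt_id ((1/2):ℝ)).div ((hasDerivAt_id ((1/2):ℝ)).const_sub 1)
      (by norm_num)
    refine h0.congr_deriv ?_
    norm_num
  rw [px_eq_deriv _ _ hd,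
    show (fun t : ℝ => D2G (t, z₀.2)) = (fun t : ℝ => t / (1 - t)) from rfl,
    show z₀.1 = (1/2 : ℝ) from rfl, h.deriv]

lemma py_D2G_z0 : py D2G z₀ = 0 := by
  have hd : DifferentiableAt ℝ D2G z₀ := by
    have h' : DifferentiableAt ℝ (fun w : ℝ × ℝ => w.1 / (1 - w.1)) z₀ :=
      by simp only [div_eq_mul_inv]; fun_prop (disch := norm_num [z₀])
    exact h'
  have h : HasDerivAt (fun _ : ℝ => (1/2 : ℝ) / (1 - (1/2 : ℝ))) 0 (1/4 : ℝ) :=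
    hasDerivAt_const _ _
  rw [py_eq_deriv _ _ hd,
    show (fun t : ℝ => D2G (z₀.1, t)) = (fun _ : ℝ => (1/2 : ℝ) / (1 - (1/2 : ℝ))) from rfl,
    show z₀.2 = (1/4 : ℝ) from rfl, h.deriv]

lemma px_D1G5_z0 : px D1G5 z₀ = 96 := by
  have hd : DifferentiableAt ℝ D1G5 z₀ := by
    have h' : DifferentiableAt ℝ
        (fun w : ℝ × ℝ => w.1 ^ 2 * (1 - w.2) / (w.2 ^ 2 * (1 - w.1) ^ 2)) z₀ :=
      by simp only [div_eq_mul_inv]; fun_prop (disch := norm_num [z₀])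
    exact h'
  have h : HasDerivAt (fun t : ℝ => t ^ 2 * (1 - (1/4 : ℝ)) / ((1/4 : ℝ) ^ 2 * (1 - t) ^ 2))
      96 (1/2 : ℝ) := by
    have h0 := ((hasDerivAt_pow 2 ((1/2):ℝ)).mul_const (1 - (1/4 : ℝ))).div
      ((((hasDerivAt_id ((1/2):ℝ)).const_sub 1).pow 2).const_mul ((1/4 : ℝ) ^ 2)) (by norm_num)
    refine h0.congr_deriv ?_
    norm_num
  rw [px_eq_deriv _ _ hd,
    show (fun t : ℝ => D1G5 (t, z₀.2)) =
      (fun t : ℝ => t ^ 2 * (1 - (1/4 : ℝ)) / ((1/4 : ℝ) ^ 2 * (1 - t) ^ 2)) from rfl,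
    show z₀.1 = (1/2 : ℝ) from rfl, h.deriv]

lemma px_D2G5_z0 : px D2G5 z₀ = 48 := by
  have hd : DifferentiableAt ℝ D2G5 z₀ := by
    have h' : DifferentiableAt ℝ (fun w : ℝ × ℝ => w.1 ^ 2 / ((1 - w.1) * w.2 ^ 2)) z₀ :=
      by simp only [div_eq_mul_inv]; fun_prop (disch := norm_num [z₀])
    exact h'
  have h : HasDerivAt (fun t : ℝ => t ^ 2 / ((1 - t) * (1/4 : ℝ) ^ 2)) 48 (1/2 : ℝ) := by
    have h0 := (hasDerivAt_pow 2 ((1/2):ℝ)).div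
      (((hasDerivAt_id ((1/2):ℝ)).const_sub 1).mul_const ((1/4 : ℝ) ^ 2)) (by norm_num)
    refine h0.congr_deriv ?_
    norm_num
  rw [px_eq_deriv _ _ hd,
    show (fun t : ℝ => D2G5 (t, z₀.2)) = (fun t : ℝ => t ^ 2 / ((1 - t) * (1/4 : ℝ) ^ 2)) from rfl,
    show z₀.1 = (1/2 : ℝ) from rfl, h.deriv]

lemma py_D2G5_z0 : py D2G5 z₀ = -64 := by
  have hd : DifferentiableAt ℝ D2G5 z₀ := by
    have h' : DifferentiableAt ℝ (fun w : ℝ × ℝ => w.1 ^ 2 / ((1 - w.1) * w.2 ^ 2)) z₀ :=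
      by simp only [div_eq_mul_inv]; fun_prop (disch := norm_num [z₀])
    exact h'
  have h : HasDerivAt (fun t : ℝ => (1/2 : ℝ) ^ 2 / ((1 - (1/2 : ℝ)) * t ^ 2)) (-64) (1/4 : ℝ) := by
    have h0 := (hasDerivAt_const ((1/4):ℝ) ((1/2 : ℝ) ^ 2)).div
      ((hasDerivAt_pow 2 ((1/4):ℝ)).const_mul (1 - (1/2 : ℝ))) (by norm_num)
    refine h0.congr_deriv ?_
    norm_num
  rw [py_eq_deriv _ _ hd,
    show (fun t : ℝ => D2G5 (z₀.1, t)) =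
      (fun t : ℝ => (1/2 : ℝ) ^ 2 / ((1 - (1/2 : ℝ)) * t ^ 2)) from rfl,
    show z₀.2 = (1/4 : ℝ) from rfl, h.deriv]

/-- for the Bol 5-web given by `f = y/x`, `g = (1-y)/(1-x)`,
`g₅ = (x - xy)/(y - xy)`, the relative invariant `I₅ = I(f,g₅) - I(f,g)` is not
identically zero on `U = {0 < x < 1, 0 < y < 1, x ≠ y}`. -/
theorem stmt_18 :
    ∃ z ∈ {z : ℝ × ℝ | 0 < z.1 ∧ z.1 < 1 ∧ 0 < z.2 ∧ z.2 < 1 ∧ z.1 ≠ z.2},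
      Iinv (fun z => z.2 / z.1) (fun z => (z.1 - z.1 * z.2) / (z.2 - z.1 * z.2)) z -
        Iinv (fun z => z.2 / z.1) (fun z => (1 - z.2) / (1 - z.1)) z ≠ 0 := by
  refine ⟨z₀, ⟨by norm_num [z₀], by norm_num [z₀], by norm_num [z₀], by norm_num [z₀],
    by norm_num [z₀]⟩, ?_⟩
  show Iinv Ff Gg5 z₀ - Iinv Ff Gg z₀ ≠ 0
  have hpxF : px Ff z₀ = -1 := by rw [px_F z₀ hz₀S]; norm_num [z₀]
  have hpyF : py Ff z₀ = 2 := by rw [py_F z₀ hz₀S]; norm_num [z₀]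
  have hpxG : px Gg z₀ = 3 := by rw [px_G z₀ hz₀S]; norm_num [z₀]
  have hpyG : py Gg z₀ = -2 := by rw [py_G z₀ hz₀S]; norm_num [z₀]
  have hpxG5 : px Gg5 z₀ = 12 := by rw [px_G5 z₀ hz₀S]; norm_num [z₀]
  have hpyG5 : py Gg5 z₀ = -16 := by rw [py_G5 z₀ hz₀S]; norm_num [z₀]
  have h11G : px (d1 Ff Gg) z₀ = 24 := (px_congr_S d1_G_eq hz₀S).trans px_D1G_z0
  have h12G : px (d2 Ff Gg) z₀ = 4 := (px_congr_S d2_G_eq hz₀S).trans px_D2G_z0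
  have h22G : py (d2 Ff Gg) z₀ = 0 := (py_congr_S d2_G_eq hz₀S).trans py_D2G_z0
  have h11G5 : px (d1 Ff Gg5) z₀ = 96 := (px_congr_S d1_G5_eq hz₀S).trans px_D1G5_z0
  have h12G5 : px (d2 Ff Gg5) z₀ = 48 := (px_congr_S d2_G5_eq hz₀S).trans px_D2G5_z0
  have h22G5 : py (d2 Ff Gg5) z₀ = -64 := (py_congr_S d2_G5_eq hz₀S).trans py_D2G5_z0
  simp only [Iinv, d1, d2]
  rw [hpxF, hpyF, hpxG, hpyG, hpxG5, hpyG5, h11G, h12G, h22G, h11G5, h12G5, h22G5]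
  norm_num
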